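/- arXiv:2505.21039 — 3 statements merged into one kernel-verified Lean document; each statement's English description precedes it below -/
import Mathlib

section
/- Let Ω(A) = λ₁‖A‖_* + λ₂‖A‖_F² defined on n×n positive semidefinite matrices, with λ₁ ≥ 0 and λ₂ > 0, where ‖A‖_* = trace(A) for A ⪰ 0 and ‖A‖_F is the Frobenius norm. Then for any symmetric matrix B, sup over A ⪰ 0 of ⟨A, B⟩ − λ₁ trace(A) − λ₂‖A‖_F² equals (1/(4λ₂))‖[B − λ₁ I]₊‖_F², i.e. the Fenchel conjugate of Ω over the PSD cone is Ω*(B) = (1/(4λ₂))‖[B − λ₁I]₊‖_F², attained at A* = (1/(2λ₂))[B − λ₁ I]₊. -/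
open Matrix

/-- Matrix positive part via eigendecomposition (junk value `0` if not Hermitian). -/
noncomputable def matPosPart {n : Type*} [Fintype n] [DecidableEq n]
    (M : Matrix n n ℝ) : Matrix n n ℝ :=
  if h : M.IsHermitian then
    (h.eigenvectorUnitary : Matrix n n ℝ) *
      Matrix.diagonal (fun i => max 0 (h.eigenvalues i)) *
      star (h.eigenvectorUnitary : Matrix n n ℝ)
  else 0

/-- Squared Frobenius norm `‖A‖_F² = trace(AᵀA)`. -/
noncomputable def frobSq {n : Type*} [Fintype n] (A : Matrix n n ℝ) : ℝ :=
  Matrix.trace (Aᵀ * A)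

section Helpers

variable {n : Type*} [Fintype n] [DecidableEq n]

/-- trace of conjugated diagonal product -/
lemma conj_diag_trace (U : Matrix n n ℝ) (hU : star U * U = 1) (d e : n → ℝ) :
    Matrix.trace ((U * diagonal d * star U) * (U * diagonal e * star U))
      = ∑ i, d i * e i := by
  have h1 : (U * diagonal d * star U) * (U * diagonal e * star U)
      = U * (diagonal d * diagonal e) * star U := by
    calc (U * diagonal d * star U) * (U * diagonal e * star U)
        = U * diagonal d * (star U * U) * diagonal e * star U := by
          simp only [Matrix.mul_assoc]
      _ = U * (diagonal d * diagonal e) * star U := by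
          rw [hU]; simp only [Matrix.mul_one, Matrix.mul_assoc]
  rw [h1, Matrix.trace_mul_comm, ← Matrix.mul_assoc, ← Matrix.mul_assoc, hU]
  simp [diagonal_mul_diagonal, Matrix.trace_diagonal]

omit [DecidableEq n] in
lemma frobSq_nonneg' (A : Matrix n n ℝ) : 0 ≤ Matrix.trace (Aᵀ * A) := by
  rw [Matrix.trace]
  refine Finset.sum_nonneg fun j _ => ?_
  rw [Matrix.diag_apply, Matrix.mul_apply]
  exact Finset.sum_nonneg fun i _ => by simp [mul_self_nonneg]

open MatrixOrder in
lemma posSemidef_iff_eq_transpose_mul_self {A : Matrix n n ℝ} :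
    A.PosSemidef ↔ ∃ B : Matrix n n ℝ, A = Bᴴ * B := by
  constructor
  · intro hA
    obtain ⟨X, hX, -, hXX⟩ :=
      CFC.exists_sqrt_of_isSelfAdjoint_of_quasispectrumRestricts hA.isHermitian
        (QuasispectrumRestricts.nnreal_of_nonneg hA.nonneg)
    exact ⟨X, by rw [← Matrix.star_eq_conjTranspose, hX.star_eq, hXX]⟩
  · rintro ⟨B, rfl⟩
    exact posSemidef_conjTranspose_mul_self B

lemma trace_psd_mul_nonneg {A B : Matrix n n ℝ} (hA : A.PosSemidef) (hB : B.PosSemidef) :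
    0 ≤ Matrix.trace (A * B) := by
  obtain ⟨X, rfl⟩ := posSemidef_iff_eq_transpose_mul_self.mp hA
  obtain ⟨Y, rfl⟩ := posSemidef_iff_eq_transpose_mul_self.mp hB
  have h : Matrix.trace (Xᴴ * X * (Yᴴ * Y)) = Matrix.trace ((X * Yᴴ)ᴴ * (X * Yᴴ)) := by
    rw [Matrix.conjTranspose_mul, Matrix.conjTranspose_conjTranspose]
    rw [Matrix.trace_mul_comm, Matrix.mul_assoc, Matrix.trace_mul_comm]
    simp only [Matrix.mul_assoc]
  rw [h]
  have := frobSq_nonneg' (X * Yᴴ)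
  rwa [← Matrix.conjTranspose_eq_transpose_of_trivial] at this

lemma spectral_real {M : Matrix n n ℝ} (h : M.IsHermitian) :
    M = (h.eigenvectorUnitary : Matrix n n ℝ) * diagonal h.eigenvalues *
      star (h.eigenvectorUnitary : Matrix n n ℝ) := by
  conv_lhs => rw [h.spectral_theorem]
  norm_num [Function.comp]

lemma star_mul_self_eigU {M : Matrix n n ℝ} (h : M.IsHermitian) :
    star (h.eigenvectorUnitary : Matrix n n ℝ) * (h.eigenvectorUnitary : Matrix n n ℝ) = 1 :=
  Unitary.coe_star_mul_self _

lemma matPosPart_eq {M : Matrix n n ℝ} (h : M.IsHermitian) :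
    matPosPart M = (h.eigenvectorUnitary : Matrix n n ℝ) *
      diagonal (fun i => max 0 (h.eigenvalues i)) * star (h.eigenvectorUnitary : Matrix n n ℝ) := by
  rw [matPosPart, dif_pos h]

lemma matPosPart_posSemidef {M : Matrix n n ℝ} (h : M.IsHermitian) :
    (matPosPart M).PosSemidef := by
  rw [matPosPart_eq h]
  have hd : (Matrix.diagonal (fun i => max 0 (h.eigenvalues i))).PosSemidef :=
    Matrix.PosSemidef.diagonal fun i => le_max_left _ _
  simpa [Matrix.star_eq_conjTranspose] using
    hd.mul_mul_conjTranspose_same (h.eigenvectorUnitary : Matrix n n ℝ)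

lemma matPosPart_sub_posSemidef {M : Matrix n n ℝ} (h : M.IsHermitian) :
    (matPosPart M - M).PosSemidef := by
  have hdiag : diagonal (fun i => max 0 (h.eigenvalues i) - h.eigenvalues i)
      = diagonal (fun i => max 0 (h.eigenvalues i)) - diagonal h.eigenvalues := by
    ext i j
    by_cases hij : i = j <;> simp [Matrix.diagonal_apply, hij]
  have hsub : matPosPart M - M = (h.eigenvectorUnitary : Matrix n n ℝ) *
      diagonal (fun i => max 0 (h.eigenvalues i) - h.eigenvalues i) *
      star (h.eigenvectorUnitary : Matrix n n ℝ) := by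
    rw [hdiag, Matrix.mul_sub, Matrix.sub_mul, ← matPosPart_eq h]
    congr 1
    exact spectral_real h
  rw [hsub]
  have hd : (Matrix.diagonal (fun i => max 0 (h.eigenvalues i) - h.eigenvalues i)).PosSemidef :=
    Matrix.PosSemidef.diagonal fun i => sub_nonneg.mpr (le_max_right _ _)
  simpa [Matrix.star_eq_conjTranspose] using
    hd.mul_mul_conjTranspose_same (h.eigenvectorUnitary : Matrix n n ℝ)

lemma trace_matPosPart_mul_self {M : Matrix n n ℝ} (h : M.IsHermitian) :
    Matrix.trace (matPosPart M * matPosPart M)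
      = ∑ i, max 0 (h.eigenvalues i) * max 0 (h.eigenvalues i) := by
  rw [matPosPart_eq h]
  exact conj_diag_trace _ (star_mul_self_eigU h) _ _

lemma trace_matPosPart_mul {M : Matrix n n ℝ} (h : M.IsHermitian) :
    Matrix.trace (matPosPart M * M) = Matrix.trace (matPosPart M * matPosPart M) := by
  have hmm : matPosPart M * M = ((h.eigenvectorUnitary : Matrix n n ℝ) *
      diagonal (fun i => max 0 (h.eigenvalues i)) * star (h.eigenvectorUnitary : Matrix n n ℝ)) *
      ((h.eigenvectorUnitary : Matrix n n ℝ) * diagonal h.eigenvalues *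
        star (h.eigenvectorUnitary : Matrix n n ℝ)) := by
    rw [matPosPart_eq h]
    congr 1
    exact spectral_real h
  rw [hmm, conj_diag_trace _ (star_mul_self_eigU h), trace_matPosPart_mul_self h]
  refine Finset.sum_congr rfl fun i _ => ?_
  rcases le_total (h.eigenvalues i) 0 with hle | hle
  · rw [max_eq_left hle]; ring
  · rw [max_eq_right hle]

lemma transpose_of_posSemidef {A : Matrix n n ℝ} (hA : A.PosSemidef) : Aᵀ = A := by
  rw [← Matrix.conjTranspose_eq_transpose_of_trivial]; exact hA.isHermitian

end Helpers

/-- Fenchel conjugate of `Ω(A) = λ₁‖A‖_* + λ₂‖A‖_F²` over the PSD cone: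
`sup_{A ⪰ 0} ⟨A,B⟩ − λ₁ tr(A) − λ₂‖A‖_F² = (1/(4λ₂))‖[B − λ₁I]₊‖_F²`,
attained at `A* = (1/(2λ₂))[B − λ₁I]₊`. -/
theorem fenchel_conjugate_psd_cone
    {n : Type*} [Fintype n] [DecidableEq n]
    (B : Matrix n n ℝ) (hB : B.IsHermitian)
    (l1 l2 : ℝ) (hl1 : 0 ≤ l1) (hl2 : 0 < l2) :
    (⨆ A : {A : Matrix n n ℝ // A.PosSemidef},
        Matrix.trace ((A : Matrix n n ℝ)ᵀ * B) - l1 * Matrix.trace (A : Matrix n n ℝ)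
          - l2 * frobSq (A : Matrix n n ℝ)) =
      (1 / (4 * l2)) * frobSq (matPosPart (B - l1 • (1 : Matrix n n ℝ))) ∧
    (Matrix.trace (((1 / (2 * l2)) • matPosPart (B - l1 • (1 : Matrix n n ℝ)))ᵀ * B)
        - l1 * Matrix.trace ((1 / (2 * l2)) • matPosPart (B - l1 • (1 : Matrix n n ℝ)))
        - l2 * frobSq ((1 / (2 * l2)) • matPosPart (B - l1 • (1 : Matrix n n ℝ)))) =
      (1 / (4 * l2)) * frobSq (matPosPart (B - l1 • (1 : Matrix n n ℝ))) := by
  have hl2ne : l2 ≠ 0 := ne_of_gt hl2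
  set C : Matrix n n ℝ := B - l1 • (1 : Matrix n n ℝ) with hCdef
  have hC : C.IsHermitian := by
    apply hB.sub
    simp [Matrix.IsHermitian]
  set P : Matrix n n ℝ := matPosPart C with hPdef
  have hPpsd : P.PosSemidef := matPosPart_posSemidef hC
  have hPt : Pᵀ = P := transpose_of_posSemidef hPpsd
  have hPC : Matrix.trace (P * C) = Matrix.trace (P * P) := trace_matPosPart_mul hC
  have hfrobP : frobSq P = Matrix.trace (P * P) := by rw [frobSq, hPt]
  -- generic reduction:  tr(A B) - l1 tr A = tr(A C)
  have htraceAC : ∀ A : Matrix n n ℝ,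
      Matrix.trace (A * C) = Matrix.trace (A * B) - l1 * Matrix.trace A := by
    intro A
    rw [hCdef, Matrix.mul_sub, Matrix.trace_sub, Matrix.mul_smul, Matrix.mul_one,
      Matrix.trace_smul, smul_eq_mul]
  -- equality at the optimizer
  have heq : (Matrix.trace (((1 / (2 * l2)) • P)ᵀ * B)
        - l1 * Matrix.trace ((1 / (2 * l2)) • P)
        - l2 * frobSq ((1 / (2 * l2)) • P)) = (1 / (4 * l2)) * frobSq P := by
    have h1 : ((1 / (2 * l2)) • P)ᵀ = (1 / (2 * l2)) • P := by
      rw [Matrix.transpose_smul, hPt]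
    have h2 : frobSq ((1 / (2 * l2)) • P)
        = (1 / (2 * l2)) * ((1 / (2 * l2)) * Matrix.trace (P * P)) := by
      rw [frobSq, h1, Matrix.smul_mul, Matrix.mul_smul, Matrix.trace_smul,
        Matrix.trace_smul, smul_eq_mul, smul_eq_mul]
    have h3 : Matrix.trace (((1 / (2 * l2)) • P) * B)
        = (1 / (2 * l2)) * Matrix.trace (P * B) := by
      rw [Matrix.smul_mul, Matrix.trace_smul, smul_eq_mul]
    have h4 : Matrix.trace ((1 / (2 * l2)) • P) = (1 / (2 * l2)) * Matrix.trace P := by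
      rw [Matrix.trace_smul, smul_eq_mul]
    have h5 : Matrix.trace (P * B) - l1 * Matrix.trace P = Matrix.trace (P * P) := by
      rw [← htraceAC P, hPC]
    rw [h1, h3, h4, h2, hfrobP]
    field_simp
    linear_combination 8 * h5
  -- the upper bound for every PSD matrix A
  have hbound : ∀ A : Matrix n n ℝ, A.PosSemidef →
      Matrix.trace (Aᵀ * B) - l1 * Matrix.trace A - l2 * frobSq A
        ≤ (1 / (4 * l2)) * frobSq P := by
    intro A hA
    have hAt : Aᵀ = A := transpose_of_posSemidef hA
    set Q : Matrix n n ℝ := A - (1 / (2 * l2)) • P with hQdef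
    have hQt : Qᵀ = Q := by rw [hQdef, Matrix.transpose_sub, Matrix.transpose_smul, hAt, hPt]
    have hQQ : 0 ≤ Matrix.trace (Q * Q) := by
      have := frobSq_nonneg' Q; rwa [hQt] at this
    have hPA : Matrix.trace (P * A) = Matrix.trace (A * P) := Matrix.trace_mul_comm _ _
    have hexp : Matrix.trace (Q * Q) = Matrix.trace (A * A)
        - 2 * ((1 / (2 * l2)) * Matrix.trace (A * P))
        + (1 / (2 * l2)) * ((1 / (2 * l2)) * Matrix.trace (P * P)) := by
      rw [hQdef]
      simp only [Matrix.sub_mul, Matrix.mul_sub, Matrix.smul_mul, Matrix.mul_smul,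
        Matrix.trace_sub, Matrix.trace_smul, smul_smul, smul_eq_mul, hPA]
      ring
    have hAPC : 0 ≤ Matrix.trace (A * P) - Matrix.trace (A * C) := by
      have := trace_psd_mul_nonneg hA (matPosPart_sub_posSemidef hC)
      rwa [Matrix.mul_sub, Matrix.trace_sub] at this
    have hkey : 0 ≤ l2 * Matrix.trace (Q * Q) := mul_nonneg hl2.le hQQ
    have hgoal : Matrix.trace (A * C) - l2 * Matrix.trace (A * A)
        ≤ (1 / (4 * l2)) * Matrix.trace (P * P) := by
      have hexp2 : l2 * Matrix.trace (Q * Q) = l2 * Matrix.trace (A * A)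
          - Matrix.trace (A * P) + (1 / (4 * l2)) * Matrix.trace (P * P) := by
        rw [hexp]; field_simp; ring
      linarith [hkey, hAPC, hexp2.symm.le, hexp2.le]
    have hACeq := htraceAC A
    have hfA : frobSq A = Matrix.trace (A * A) := by rw [frobSq, hAt]
    rw [hAt, hfA, hfrobP]
    linarith [hgoal, hACeq]
  have hNe : Nonempty {A : Matrix n n ℝ // A.PosSemidef} := ⟨⟨0, Matrix.PosSemidef.zero⟩⟩
  constructor
  · apply le_antisymm
    · exact ciSup_le fun A => hbound A.1 A.2
    · have hAstar : ((1 / (2 * l2)) • P).PosSemidef := by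
        rw [Matrix.posSemidef_iff_dotProduct_mulVec]
        constructor
        · rw [Matrix.IsHermitian, Matrix.conjTranspose_smul, hPpsd.isHermitian]
          simp
        · intro x
          have h0 := hPpsd.dotProduct_mulVec_nonneg x
          rw [Matrix.smul_mulVec, dotProduct_smul]
          positivity
      have hb : BddAbove (Set.range fun A : {A : Matrix n n ℝ // A.PosSemidef} =>
          Matrix.trace ((A : Matrix n n ℝ)ᵀ * B) - l1 * Matrix.trace (A : Matrix n n ℝ)
            - l2 * frobSq (A : Matrix n n ℝ)) := by
        refine ⟨(1 / (4 * l2)) * frobSq P, ?_⟩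
        rintro x ⟨A, rfl⟩
        exact hbound A.1 A.2
      rw [← heq]
      exact le_ciSup hb (⟨(1 / (2 * l2)) • P, hAstar⟩ : {A : Matrix n n ℝ // A.PosSemidef})
  · exact heq
end

section
/- (Bretagnolle–Huber inequality) For probability measures P and Q on a common measurable space, the total variation distance satisfies TV(P,Q)² ≤ 1 − exp(−KL(P‖Q)), where KL denotes the Kullback–Leibler divergence. -/
open MeasureTheory Classical

set_option maxHeartbeats 1000000

/-- Total variation distance `sup_A |P(A) − Q(A)|` (over measurable sets). -/
noncomputable def tvDist {Ω : Type*} [MeasurableSpace Ω] (P Q : Measure Ω) : ℝ :=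
  ⨆ s : {s : Set Ω // MeasurableSet s}, |(P s.1).toReal - (Q s.1).toReal|

/-- Kullback–Leibler divergence: `∫ log(dP/dQ) dP` when `P ≪ Q` (and the
integrand is integrable), and `+∞` otherwise. -/

noncomputable def klDivergence {Ω : Type*} [MeasurableSpace Ω] (P Q : Measure Ω) :
    ENNReal :=
  if P ≪ Q ∧ Integrable (fun x => Real.log (P.rnDeriv Q x).toReal) P then
    ENNReal.ofReal (∫ x, Real.log (P.rnDeriv Q x).toReal ∂P)
  else ⊤

lemma tvDist_term_le_one {Ω : Type*} [MeasurableSpace Ω] (P Q : Measure Ω)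
    [IsProbabilityMeasure P] [IsProbabilityMeasure Q] (s : {s : Set Ω // MeasurableSet s}) :
    |(P s.1).toReal - (Q s.1).toReal| ≤ 1 := by
  have h1 : (P s.1).toReal ≤ 1 := by
    have := measure_mono (Set.subset_univ s.1) (μ := P)
    simpa using ENNReal.toReal_mono (by simp) this
  have h2 : (Q s.1).toReal ≤ 1 := by
    have := measure_mono (Set.subset_univ s.1) (μ := Q)
    simpa using ENNReal.toReal_mono (by simp) this
  have h3 : (0:ℝ) ≤ (P s.1).toReal := ENNReal.toReal_nonneg
  have h4 : (0:ℝ) ≤ (Q s.1).toReal := ENNReal.toReal_nonneg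
  rw [abs_le]; constructor <;> linarith

lemma tvDist_bddAbove {Ω : Type*} [MeasurableSpace Ω] (P Q : Measure Ω)
    [IsProbabilityMeasure P] [IsProbabilityMeasure Q] :
    BddAbove (Set.range fun s : {s : Set Ω // MeasurableSet s} =>
      |(P s.1).toReal - (Q s.1).toReal|) :=
  ⟨1, by rintro x ⟨s, rfl⟩; exact tvDist_term_le_one P Q s⟩

lemma tvDist_nonneg {Ω : Type*} [MeasurableSpace Ω] (P Q : Measure Ω)
    [IsProbabilityMeasure P] [IsProbabilityMeasure Q] : 0 ≤ tvDist P Q := by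
  have := le_ciSup (tvDist_bddAbove P Q) ⟨∅, MeasurableSet.empty⟩
  exact (abs_nonneg _).trans this

lemma tvDist_le_one {Ω : Type*} [MeasurableSpace Ω] (P Q : Measure Ω)
    [IsProbabilityMeasure P] [IsProbabilityMeasure Q] : tvDist P Q ≤ 1 := by
  exact ciSup_le fun s => tvDist_term_le_one P Q s


lemma bh_aux1 (a : ℝ) (ha : 0 ≤ a) :
    a * Real.exp (-(2⁻¹) * Real.log a) = Real.sqrt a := by
  rcases eq_or_lt_of_le ha with h | h
  · simp [← h]
  · have hg : Real.exp (-(2⁻¹) * Real.log a) = a ^ (-(2⁻¹ : ℝ)) := by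
      rw [Real.rpow_def_of_pos h]; congr 1; ring
    rw [hg]
    nth_rewrite 1 [← Real.rpow_one a]
    rw [← Real.rpow_add h, Real.sqrt_eq_rpow]
    norm_num

lemma bh_aux2 (a : ℝ) (ha : 0 ≤ a) : Real.sqrt a ≤ 1 + a := by
  have : Real.sqrt a ≤ Real.sqrt ((1 + a) ^ 2) := by
    apply Real.sqrt_le_sqrt; nlinarith
  rwa [Real.sqrt_sq (by linarith)] at this


lemma bh_aux3 (a : ℝ) (ha : 0 ≤ a) :
    ENNReal.ofReal (Real.sqrt a) ^ (2:ℝ) = ENNReal.ofReal a := by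
  rw [ENNReal.ofReal_rpow_of_nonneg (Real.sqrt_nonneg _) (by norm_num)]
  congr 1
  rw [show (2:ℝ) = ((2:ℕ):ℝ) by norm_num, Real.rpow_natCast, Real.sq_sqrt ha]

lemma bh_aux4 (m M S : ℝ) (hm : 0 ≤ m) (hM : 0 ≤ M) (hS : 0 ≤ S)
    (h : S ≤ m ^ (1/2:ℝ) * M ^ (1/2:ℝ)) : S ^ 2 ≤ m * M := by
  have h2 : (m ^ (1/2:ℝ) * M ^ (1/2:ℝ)) ^ 2 = m * M := by
    rw [mul_pow, ← Real.rpow_natCast (m ^ (1/2:ℝ)) 2, ← Real.rpow_natCast (M ^ (1/2:ℝ)) 2,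
      ← Real.rpow_mul hm, ← Real.rpow_mul hM]
    norm_num
  calc S ^ 2 ≤ (m ^ (1/2:ℝ) * M ^ (1/2:ℝ)) ^ 2 := pow_le_pow_left₀ hS h 2
    _ = m * M := h2

lemma bh_aux5 (a : ℝ) (ha : 0 ≤ a) :
    ENNReal.ofReal (Real.sqrt (min a 1)) * ENNReal.ofReal (Real.sqrt (max a 1))
      = ENNReal.ofReal (Real.sqrt a) := by
  rw [← ENNReal.ofReal_mul (Real.sqrt_nonneg _),
    ← Real.sqrt_mul (le_min ha zero_le_one), min_mul_max, mul_one]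

lemma bh_core {Ω : Type*} [MeasurableSpace Ω] (P Q : Measure Ω)
    [IsProbabilityMeasure P] [IsProbabilityMeasure Q] (hPQ : P ≪ Q)
    (hint : Integrable (fun x => Real.log (P.rnDeriv Q x).toReal) P) :
    tvDist P Q ^ 2 ≤ 1 - Real.exp (-∫ x, Real.log (P.rnDeriv Q x).toReal ∂P) := by
  set p : Ω → ℝ := fun x => (P.rnDeriv Q x).toReal with hp_def
  have hp_meas : Measurable p := (Measure.measurable_rnDeriv P Q).ennreal_toReal
  have hp_nonneg : ∀ x, 0 ≤ p x := fun x => ENNReal.toReal_nonneg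
  have hp_int : Integrable p Q := Measure.integrable_toReal_rnDeriv
  have hp_one : ∫ x, p x ∂Q = 1 := by
    rw [Measure.integral_toReal_rnDeriv hPQ]; simp
  set I : ℝ := ∫ x, Real.log (p x) ∂P with hI_def
  set m : ℝ := ∫ x, min (p x) 1 ∂Q with hm_def
  set M : ℝ := ∫ x, max (p x) 1 ∂Q with hM_def
  have hmin_int : Integrable (fun x => min (p x) 1) Q := hp_int.inf (integrable_const 1)
  have hmax_int : Integrable (fun x => max (p x) 1) Q := hp_int.sup (integrable_const 1)
  have hm_nonneg : 0 ≤ m := integral_nonneg fun x => le_min (hp_nonneg x) zero_le_one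
  have hmM : m + M = 2 := by
    rw [hm_def, hM_def, ← integral_add hmin_int hmax_int]
    have : ∀ x, min (p x) 1 + max (p x) 1 = p x + 1 := fun x => min_add_max _ _
    simp_rw [this]
    rw [integral_add hp_int (integrable_const 1), hp_one]
    simp; norm_num
  -- T = 1 - m bounds tvDist
  have hsub_int : Integrable (fun x => p x - 1) Q := hp_int.sub (integrable_const 1)
  have hT_int : Integrable (fun x => max (p x - 1) 0) Q := hsub_int.pos_part
  set T : ℝ := ∫ x, max (p x - 1) 0 ∂Q with hT_def
  have hTm : T = 1 - m := by
    have : ∀ x, max (p x - 1) 0 = p x - min (p x) 1 := by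
      intro x; rcases le_total (p x) 1 with h | h
      · rw [max_eq_right (by linarith), min_eq_left h]; ring
      · rw [max_eq_left (by linarith), min_eq_right h]
    rw [hT_def]
    simp_rw [this]
    rw [integral_sub hp_int hmin_int, hp_one, hm_def]
  have hsub_zero : ∫ x, (p x - 1) ∂Q = 0 := by
    rw [integral_sub hp_int (integrable_const 1), hp_one]; simp
  have htv_le : tvDist P Q ≤ T := by
    apply ciSup_le
    rintro ⟨s, hs⟩
    have key : ∀ t : Set Ω, MeasurableSet t → ∫ x in t, (p x - 1) ∂Q ≤ T := by
      intro t ht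
      refine le_trans (setIntegral_mono_on hsub_int.integrableOn hT_int.integrableOn ht
        fun x _ => le_max_left _ _) ?_
      exact setIntegral_le_integral hT_int (Filter.Eventually.of_forall fun x => le_max_right _ _)
    have hPs : (P s).toReal - (Q s).toReal = ∫ x in s, (p x - 1) ∂Q := by
      rw [integral_sub hp_int.integrableOn (integrable_const 1).integrableOn,
        Measure.setIntegral_toReal_rnDeriv hPQ s]
      simp
      rfl
    rw [abs_le]
    constructor
    · have hc : ∫ x in s, (p x - 1) ∂Q + ∫ x in sᶜ, (p x - 1) ∂Q = 0 := by
        rw [integral_add_compl hs hsub_int, hsub_zero]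
      have := key sᶜ hs.compl
      simp only [hPs]
      linarith
    · simpa [hPs] using key s hs
  have hT_nonneg : 0 ≤ T := integral_nonneg fun x => le_max_right _ _
  -- Jensen: exp(-I/2) ≤ S := ∫ sqrt p dQ
  set g : Ω → ℝ := fun x => Real.exp (-(2⁻¹) * Real.log (p x)) with hg_def
  have hpg : ∀ x, p x • g x = Real.sqrt (p x) := fun x => by
    rw [smul_eq_mul]; exact bh_aux1 (p x) (hp_nonneg x)
  set S : ℝ := ∫ x, Real.sqrt (p x) ∂Q with hS_def
  have hS_eq : S = ∫ x, g x ∂P := by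
    rw [hS_def, ← integral_rnDeriv_smul hPQ]
    exact integral_congr_ae (Filter.Eventually.of_forall fun x => (hpg x).symm)
  have hsqrt_int : Integrable (fun x => Real.sqrt (p x)) Q := by
    refine Integrable.mono ((integrable_const 1).add hp_int)
      ((hp_meas.sqrt).aestronglyMeasurable) ?_
    refine Filter.Eventually.of_forall fun x => ?_
    simp only [Pi.add_apply, Real.norm_eq_abs]
    rw [abs_of_nonneg (Real.sqrt_nonneg _), abs_of_nonneg (by linarith [hp_nonneg x])]
    exact bh_aux2 (p x) (hp_nonneg x)
  have hg_int : Integrable g P := by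
    rw [← integrable_rnDeriv_smul_iff hPQ]
    exact hsqrt_int.congr (Filter.Eventually.of_forall fun x => (hpg x).symm)
  have hjensen : Real.exp (-(2⁻¹) * I) ≤ S := by
    have hfi : Integrable (fun x => -(2⁻¹ : ℝ) * Real.log (p x)) P := hint.const_mul _
    have := convexOn_exp.map_integral_le Real.continuous_exp.continuousOn isClosed_univ
      (Filter.Eventually.of_forall fun x => Set.mem_univ _) hfi
      (by exact hg_int)
    rw [integral_const_mul] at this
    rw [hS_eq]
    exact this
  -- Cauchy-Schwarz: S ^ 2 ≤ m * M
  have hM_nonneg : 0 ≤ M := integral_nonneg fun x => le_trans zero_le_one (le_max_right _ _)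
  have hS_nonneg : 0 ≤ S := integral_nonneg fun x => Real.sqrt_nonneg _
  have hCS : S ^ 2 ≤ m * M := by
    have hconj : Real.HolderConjugate 2 2 := ⟨by norm_num, by norm_num, by norm_num⟩
    have ha_meas : AEMeasurable (fun x => ENNReal.ofReal (Real.sqrt (min (p x) 1))) Q :=
      (ENNReal.measurable_ofReal.comp ((hp_meas.min measurable_const).sqrt)).aemeasurable
    have hb_meas : AEMeasurable (fun x => ENNReal.ofReal (Real.sqrt (max (p x) 1))) Q :=
      (ENNReal.measurable_ofReal.comp ((hp_meas.max measurable_const).sqrt)).aemeasurable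
    have hmain : ENNReal.ofReal S ≤ ENNReal.ofReal (m ^ (1/2:ℝ) * M ^ (1/2:ℝ)) := by
      calc ENNReal.ofReal S = ∫⁻ x, ENNReal.ofReal (Real.sqrt (p x)) ∂Q :=
            ofReal_integral_eq_lintegral_ofReal hsqrt_int
              (Filter.Eventually.of_forall fun x => Real.sqrt_nonneg _)
        _ = ∫⁻ x, ((fun x => ENNReal.ofReal (Real.sqrt (min (p x) 1))) *
              (fun x => ENNReal.ofReal (Real.sqrt (max (p x) 1)))) x ∂Q := by
            refine lintegral_congr fun x => ?_
            simp only [Pi.mul_apply]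
            rw [bh_aux5 (p x) (hp_nonneg x)]
        _ ≤ (∫⁻ x, ENNReal.ofReal (Real.sqrt (min (p x) 1)) ^ (2:ℝ) ∂Q) ^ (1/2:ℝ) *
              (∫⁻ x, ENNReal.ofReal (Real.sqrt (max (p x) 1)) ^ (2:ℝ) ∂Q) ^ (1/2:ℝ) :=
            ENNReal.lintegral_mul_le_Lp_mul_Lq Q hconj ha_meas hb_meas
        _ = (ENNReal.ofReal m) ^ (1/2:ℝ) * (ENNReal.ofReal M) ^ (1/2:ℝ) := by
            congr 1
            · congr 1
              exact (lintegral_congr fun x => bh_aux3 _ (le_min (hp_nonneg x) zero_le_one)).trans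
                (ofReal_integral_eq_lintegral_ofReal hmin_int
                  (Filter.Eventually.of_forall fun x => le_min (hp_nonneg x) zero_le_one)).symm
            · congr 1
              exact (lintegral_congr fun x =>
                  bh_aux3 _ (le_trans zero_le_one (le_max_right _ _))).trans
                (ofReal_integral_eq_lintegral_ofReal hmax_int
                  (Filter.Eventually.of_forall fun x =>
                    le_trans zero_le_one (le_max_right _ _))).symm
        _ = ENNReal.ofReal (m ^ (1/2:ℝ) * M ^ (1/2:ℝ)) := by
            rw [ENNReal.ofReal_rpow_of_nonneg hm_nonneg (by norm_num),
              ENNReal.ofReal_rpow_of_nonneg hM_nonneg (by norm_num),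
              ENNReal.ofReal_mul (Real.rpow_nonneg hm_nonneg _)]
    have hle : S ≤ m ^ (1/2:ℝ) * M ^ (1/2:ℝ) :=
      (ENNReal.ofReal_le_ofReal_iff
        (mul_nonneg (Real.rpow_nonneg hm_nonneg _) (Real.rpow_nonneg hM_nonneg _))).mp hmain
    exact bh_aux4 _ _ _ hm_nonneg hM_nonneg hS_nonneg hle
  -- Combine
  have hexp : Real.exp (-I) ≤ S ^ 2 := by
    have h2 : Real.exp (-I) = Real.exp (-(2⁻¹) * I) ^ 2 := by
      rw [← Real.exp_nat_mul]; ring_nf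
    rw [h2]
    exact pow_le_pow_left₀ (Real.exp_nonneg _) hjensen 2
  have hfinal : T ^ 2 ≤ 1 - Real.exp (-I) := by
    have : m * M = 1 - T ^ 2 := by rw [hTm]; nlinarith [hmM]
    nlinarith [hexp.trans hCS]
  calc tvDist P Q ^ 2 ≤ T ^ 2 := pow_le_pow_left₀ (tvDist_nonneg P Q) htv_le 2
    _ ≤ 1 - Real.exp (-I) := hfinal

/-- Bretagnolle–Huber inequality: `TV(P,Q)² ≤ 1 − exp(−KL(P‖Q))`
(with the convention `exp(−∞) = 0`). -/

theorem bretagnolle_huber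
    {Ω : Type*} [MeasurableSpace Ω] (P Q : Measure Ω)
    [IsProbabilityMeasure P] [IsProbabilityMeasure Q] :
    tvDist P Q ^ 2 ≤
      if klDivergence P Q = ⊤ then 1
      else 1 - Real.exp (-(klDivergence P Q).toReal) := by
  by_cases hc : P ≪ Q ∧ Integrable (fun x => Real.log (P.rnDeriv Q x).toReal) P
  · have hkl : klDivergence P Q =
        ENNReal.ofReal (∫ x, Real.log (P.rnDeriv Q x).toReal ∂P) := by
      rw [klDivergence, if_pos hc]
    rw [hkl]
    simp only [ENNReal.ofReal_ne_top, if_false]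
    set I : ℝ := ∫ x, Real.log (P.rnDeriv Q x).toReal ∂P with hI
    have h1 : tvDist P Q ^ 2 ≤ 1 - Real.exp (-I) := bh_core P Q hc.1 hc.2
    have h2 : Real.exp (-(ENNReal.ofReal I).toReal) ≤ Real.exp (-I) := by
      rw [ENNReal.toReal_ofReal']
      exact Real.exp_le_exp.mpr (neg_le_neg (le_max_left _ _))
    linarith
  · have hkl : klDivergence P Q = ⊤ := by rw [klDivergence, if_neg hc]
    rw [hkl]
    rw [if_pos rfl]
    have h0 := tvDist_nonneg P Q
    have h1 := tvDist_le_one P Q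
    nlinarith
end

section
/- (Split conformal marginal coverage) Let S₁, …, S_{m+1} be exchangeable real-valued random variables. Define q̂ as the ⌈(1−α)(m+1)⌉-th smallest value among S₁, …, S_m (with q̂ = +∞ if ⌈(1−α)(m+1)⌉ > m). Then P(S_{m+1} ≤ q̂) ≥ 1 − α. -/
open MeasureTheory Classical
open scoped ENNReal

/-- Split conformal marginal coverage: if `S 0, …, S m` (i.e. `S₁,…,S_{m+1}`)
are exchangeable real random variables and `q̂` is the `⌈(1−α)(m+1)⌉`-th
smallest value among the first `m` of them (`+∞` if `⌈(1−α)(m+1)⌉ > m`),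
then `P(S_{m+1} ≤ q̂) ≥ 1 − α`. -/
theorem split_conformal_marginal_coverage
    {Ω : Type*} [MeasurableSpace Ω] (P : Measure Ω) [IsProbabilityMeasure P]
    (m : ℕ) (S : Fin (m + 1) → Ω → ℝ) (hS : ∀ i, Measurable (S i))
    (hexch : ∀ σ : Equiv.Perm (Fin (m + 1)),
      Measure.map (fun ω i => S (σ i) ω) P = Measure.map (fun ω i => S i ω) P)
    (α : ℝ) (hα : α ∈ Set.Ioo (0 : ℝ) 1)
    (k : ℕ) (hk : k = ⌈(1 - α) * (m + 1)⌉₊)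
    (qhat : Ω → EReal)
    (hqhat : ∀ ω, qhat ω =
      if k ≤ m then
        ((sInf {t : ℝ |
          k ≤ (Finset.univ.filter fun i : Fin m => S i.castSucc ω ≤ t).card} : ℝ)
            : EReal)
      else ⊤) :
    ENNReal.ofReal (1 - α) ≤ P {ω | (S (Fin.last m) ω : EReal) ≤ qhat ω} := by
  obtain ⟨hα0, hα1⟩ := hα
  have h1α0 : (0:ℝ) < 1 - α := by linarith
  by_cases hkm : k ≤ m
  · -- main case
    have hkm1 : k < m + 1 := Nat.lt_succ_of_le hkm
    have hk1 : 1 ≤ k := by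
      rw [hk]
      exact Nat.ceil_pos.mpr (by positivity)
    -- the rank functions
    set NN : Fin (m+1) → Ω → ℕ :=
      fun j ω => (Finset.univ.filter fun i => S i ω < S j ω).card with hNN
    set A : Fin (m+1) → Set Ω := fun j => {ω | NN j ω < k} with hA
    have hNNmeas : ∀ j, Measurable (NN j) := by
      intro j
      have h : NN j = fun ω => ∑ i : Fin (m+1), if S i ω < S j ω then 1 else 0 := by
        funext ω; simp only [hNN, Finset.card_filter]
      rw [h]
      exact Finset.measurable_sum _ fun i _ =>
        Measurable.ite (measurableSet_lt (hS i) (hS j)) measurable_const measurable_const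
    have hAmeas : ∀ j, MeasurableSet (A j) :=
      fun j => measurableSet_lt (hNNmeas j) measurable_const
    have hmapmeas : Measurable (fun ω (i : Fin (m+1)) => S i ω) :=
      measurable_pi_lambda _ hS
    set B : Set (Fin (m+1) → ℝ) :=
      {x | (Finset.univ.filter fun i => x i < x (Fin.last m)).card < k} with hBdef
    have hB : MeasurableSet B := by
      have h : B = {x : Fin (m+1) → ℝ |
          (∑ i : Fin (m+1), if x i < x (Fin.last m) then 1 else 0) < k} := by
        ext x; simp only [hBdef, Set.mem_setOf_eq, Finset.card_filter]
      rw [h]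
      exact measurableSet_lt (Finset.measurable_sum _ fun i _ =>
        Measurable.ite (measurableSet_lt (measurable_pi_apply i) (measurable_pi_apply _))
          measurable_const measurable_const) measurable_const
    -- exchangeability: all ranks have the same law
    have hPA : ∀ j, P (A j) = P (A (Fin.last m)) := by
      intro j
      set σ : Equiv.Perm (Fin (m+1)) := Equiv.swap (Fin.last m) j with hσ
      have hσmeas : Measurable (fun ω (i : Fin (m+1)) => S (σ i) ω) :=
        measurable_pi_lambda _ fun i => hS (σ i)
      have h1 : A j = (fun ω (i : Fin (m+1)) => S (σ i) ω) ⁻¹' B := by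
        ext ω
        simp only [hA, hBdef, Set.mem_setOf_eq, Set.mem_preimage]
        have hcard : (Finset.univ.filter fun i => S (σ i) ω < S (σ (Fin.last m)) ω).card
            = NN j ω := by
          have hlast : σ (Fin.last m) = j := Equiv.swap_apply_left _ _
          rw [hlast, hNN]
          exact Finset.card_equiv σ (fun i => by simp)
        rw [hcard]
      have h2 : A (Fin.last m) = (fun ω (i : Fin (m+1)) => S i ω) ⁻¹' B := by
        ext ω
        simp only [hA, hBdef, hNN, Set.mem_setOf_eq, Set.mem_preimage]
      rw [h1, h2, ← Measure.map_apply hσmeas hB, ← Measure.map_apply hmapmeas hB, hexch σ]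
    -- pointwise: at least k of the ranks are < k
    have hcount : ∀ ω, k ≤ (Finset.univ.filter fun j => NN j ω < k).card := by
      intro ω
      set x : Fin (m+1) → ℝ := fun i => S i ω with hx
      set σ := Tuple.sort x with hσ
      have hmono := Tuple.monotone_sort x
      have hsub : (Finset.univ.filter fun p : Fin (m+1) => (p:ℕ) < k).image σ ⊆
          Finset.univ.filter fun j => NN j ω < k := by
        intro j hj
        simp only [Finset.mem_image, Finset.mem_filter] at hj ⊢
        obtain ⟨p, ⟨-, hp⟩, rfl⟩ := hj
        refine ⟨Finset.mem_univ _, ?_⟩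
        have h1 : NN (σ p) ω = (Finset.univ.filter fun q => x (σ q) < x (σ p)).card :=
          (Finset.card_equiv σ (fun q => by simp [hNN, hx])).symm
        have h2 : (Finset.univ.filter fun q : Fin (m+1) => x (σ q) < x (σ p)) ⊆
            Finset.Iio p := by
          intro q hq
          simp only [Finset.mem_filter, Finset.mem_Iio] at hq ⊢
          by_contra hle
          exact absurd (hmono (not_lt.mp hle)) (not_le.mpr hq.2)
        calc NN (σ p) ω = _ := h1
          _ ≤ (Finset.Iio p).card := Finset.card_le_card h2
          _ = (p:ℕ) := Fin.card_Iio p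
          _ < k := hp
      have himg : ((Finset.univ.filter fun p : Fin (m+1) => (p:ℕ) < k).image σ).card = k := by
        rw [Finset.card_image_of_injective _ σ.injective]
        have h : (Finset.univ.filter fun p : Fin (m+1) => (p:ℕ) < k) =
            Finset.Iio (⟨k, hkm1⟩ : Fin (m+1)) := by
          ext p
          simp [Fin.lt_def]
        rw [h, Fin.card_Iio]
      calc k = _ := himg.symm
        _ ≤ _ := Finset.card_le_card hsub
    -- integrate: k ≤ (m+1) * P(A last)
    have hE : (k : ℝ≥0∞) ≤ ((m+1 : ℕ) : ℝ≥0∞) * P (A (Fin.last m)) := by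
      have h1 : ∀ ω, (k:ℝ≥0∞) ≤ ∑ j : Fin (m+1), if NN j ω < k then 1 else 0 := by
        intro ω
        calc (k:ℝ≥0∞) ≤ ((Finset.univ.filter fun j => NN j ω < k).card : ℝ≥0∞) := by
              exact_mod_cast hcount ω
          _ = _ := by
              rw [Finset.card_filter]
              push_cast
              exact Finset.sum_congr rfl fun j _ => by split <;> simp
      have hind : ∀ j, (∫⁻ ω, (if NN j ω < k then 1 else 0 : ℝ≥0∞) ∂P) = P (A j) := by
        intro j
        have h : (fun ω => (if NN j ω < k then 1 else 0 : ℝ≥0∞)) =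
            (A j).indicator (fun _ => 1) := by
          funext ω; rw [Set.indicator_apply]; rfl
        rw [h, lintegral_indicator_const (hAmeas j), one_mul]
      calc (k:ℝ≥0∞) = ∫⁻ _, (k:ℝ≥0∞) ∂P := by simp
        _ ≤ ∫⁻ ω, ∑ j : Fin (m+1), (if NN j ω < k then 1 else 0 : ℝ≥0∞) ∂P :=
            lintegral_mono h1
        _ = ∑ j : Fin (m+1), ∫⁻ ω, (if NN j ω < k then 1 else 0 : ℝ≥0∞) ∂P := by
            refine lintegral_finset_sum _ fun j _ => ?_
            exact Measurable.ite (hAmeas j) measurable_const measurable_const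
        _ = ∑ j : Fin (m+1), P (A j) := Finset.sum_congr rfl fun j _ => hind j
        _ = ∑ _j : Fin (m+1), P (A (Fin.last m)) := Finset.sum_congr rfl fun j _ => hPA j
        _ = ((m+1 : ℕ) : ℝ≥0∞) * P (A (Fin.last m)) := by
            rw [Finset.sum_const, Finset.card_univ, Fintype.card_fin, nsmul_eq_mul]
    -- arithmetic: 1 - α ≤ k / (m+1)
    have hfinal : ENNReal.ofReal (1 - α) ≤ P (A (Fin.last m)) := by
      have hm1 : ((m+1:ℕ) : ℝ≥0∞) ≠ 0 := by simp
      have hm2 : ((m+1:ℕ) : ℝ≥0∞) ≠ ⊤ := by simp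
      rw [← ENNReal.mul_le_mul_iff_right hm1 hm2]
      refine le_trans ?_ hE
      have h1 : (1 - α) * ((m:ℝ) + 1) ≤ (k : ℝ) := by
        rw [hk]; exact Nat.le_ceil _
      have h2 : ((m+1:ℕ):ℝ≥0∞) * ENNReal.ofReal (1-α) =
          ENNReal.ofReal ((1-α) * ((m:ℝ)+1)) := by
        rw [ENNReal.ofReal_mul h1α0.le, mul_comm]
        congr 1
        rw [← ENNReal.ofReal_natCast (m+1)]
        congr 1
        push_cast; ring
      rw [h2, ← ENNReal.ofReal_natCast k]
      exact ENNReal.ofReal_le_ofReal h1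
    -- inclusion of events
    have hsub2 : A (Fin.last m) ⊆ {ω | (S (Fin.last m) ω : EReal) ≤ qhat ω} := by
      intro ω hω
      simp only [hA, Set.mem_setOf_eq] at hω ⊢
      rw [hqhat ω, if_pos hkm, EReal.coe_le_coe_iff]
      set T := {t : ℝ | k ≤ (Finset.univ.filter fun i : Fin m => S i.castSucc ω ≤ t).card}
        with hT
      have hm0 : 0 < m := lt_of_lt_of_le hk1 hkm
      haveI : Nonempty (Fin m) := ⟨⟨0, hm0⟩⟩
      have hTne : T.Nonempty := by
        refine ⟨Finset.univ.sup' Finset.univ_nonempty (fun i : Fin m => S i.castSucc ω), ?_⟩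
        simp only [hT, Set.mem_setOf_eq]
        have h : (Finset.univ.filter fun i : Fin m =>
            S i.castSucc ω ≤ Finset.univ.sup' Finset.univ_nonempty
              (fun i : Fin m => S i.castSucc ω)) = Finset.univ :=
          Finset.filter_true_of_mem fun i _ =>
            Finset.le_sup' (fun i : Fin m => S i.castSucc ω) (Finset.mem_univ i)
        rw [h]
        simpa using hkm
      refine le_csInf hTne ?_
      intro t ht
      by_contra hlt
      push_neg at hlt
      have hle : k ≤ NN (Fin.last m) ω := by
        refine le_trans ht ?_
        refine Finset.card_le_card_of_injOn (fun i => i.castSucc) ?_ ?_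
        · intro i hi
          simp only [Finset.coe_filter, Finset.mem_coe, Set.mem_setOf_eq, Finset.mem_filter, Finset.mem_univ, true_and] at hi ⊢
          exact lt_of_le_of_lt hi hlt
        · exact fun a _ b _ hab => Fin.castSucc_injective _ hab
      omega
    exact hfinal.trans (measure_mono hsub2)
  · -- trivial case: qhat = ⊤
    have h : {ω | (S (Fin.last m) ω : EReal) ≤ qhat ω} = Set.univ := by
      ext ω
      simp [hqhat ω, if_neg hkm]
    rw [h, measure_univ]
    exact ENNReal.ofReal_le_one.mpr (by linarith)
end
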